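/- Let H be a finite-dimensional complex inner product space, C a Hermitian operator on H, and E an orthogonal projection with CE = C. Write E = E₊ + E₀ + E₋, where E₊ and E₋ are the orthogonal projections onto the spans of eigenvectors of C with positive and negative eigenvalues respectively, and E₀ = E − E₊ − E₋. Then: (1) an operator D° with 0 ≤ D° ≤ E attains sup{Tr(CD) : 0 ≤ D ≤ E} if and only if E₊ ≤ D° ≤ E₊ + E₀ (equivalently, D° = E₊ + D₀ with 0 ≤ D₀ ≤ E₀); (2) a Hermitian operator B° with B° ≥ 0, B° ≥ C attains inf{Tr(BE) : B ≥ 0, B ≥ C} if and only if B° = C₊ + B₀ with B₀ ≥ 0 and B₀E = 0; in particular, the primal solution is unique (namely D° = E₊) when E = E₊ + E₋, and the dual solution is unique (namely B° = C₊) when E = I. -/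

import Mathlib

open Matrix
open scoped ComplexOrder

noncomputable section

/-- The positive part `C₊ = ∑_{κ i > 0} κ i |χ i⟩⟨χ i|` of a Hermitian operator with
spectral data `(χ, κ)`. -/
noncomputable def posPartM {n : ℕ} (χ : Fin n → (Fin n → ℂ)) (κ : Fin n → ℝ) :
    Matrix (Fin n) (Fin n) ℂ :=
  ∑ i ∈ Finset.univ.filter (fun i => 0 < κ i),
    (κ i : ℂ) • Matrix.vecMulVec (χ i) (star (χ i))

/-- The orthogonal projection `E₊` onto the span of eigenvectors with positive
eigenvalues. -/
noncomputable def posProjM {n : ℕ} (χ : Fin n → (Fin n → ℂ)) (κ : Fin n → ℝ) :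
    Matrix (Fin n) (Fin n) ℂ :=
  ∑ i ∈ Finset.univ.filter (fun i => 0 < κ i), Matrix.vecMulVec (χ i) (star (χ i))

/-- The orthogonal projection `E₋` onto the span of eigenvectors with negative
eigenvalues. -/
noncomputable def negProjM {n : ℕ} (χ : Fin n → (Fin n → ℂ)) (κ : Fin n → ℝ) :
    Matrix (Fin n) (Fin n) ℂ :=
  ∑ i ∈ Finset.univ.filter (fun i => κ i < 0), Matrix.vecMulVec (χ i) (star (χ i))

section Helpers

variable {n : ℕ}

lemma mul_vmv (A : Matrix (Fin n) (Fin n) ℂ) (u v : Fin n → ℂ) :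
    A * vecMulVec u v = vecMulVec (A *ᵥ u) v := by
  ext i j
  simp [vecMulVec_apply, Matrix.mul_apply, mulVec, dotProduct, Finset.sum_mul, mul_assoc]

lemma vmv_mul_vmv (u v w x : Fin n → ℂ) :
    vecMulVec u v * vecMulVec w x = (v ⬝ᵥ w) • vecMulVec u x := by
  ext i j
  simp only [Matrix.mul_apply, vecMulVec_apply, Matrix.smul_apply, smul_eq_mul, dotProduct,
    Finset.sum_mul]
  exact Finset.sum_congr rfl fun k _ => by ring

lemma trace_vmv (u v : Fin n → ℂ) : (vecMulVec u v).trace = v ⬝ᵥ u := by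
  simp [Matrix.trace, Matrix.diag, vecMulVec_apply, dotProduct, mul_comm]

lemma trace_vmv_mul (u v : Fin n → ℂ) (A : Matrix (Fin n) (Fin n) ℂ) :
    (vecMulVec u v * A).trace = v ⬝ᵥ (A *ᵥ u) := by
  rw [Matrix.trace_mul_comm, mul_vmv, trace_vmv]

lemma vmv_conjT (u : Fin n → ℂ) : (vecMulVec u (star u))ᴴ = vecMulVec u (star u) := by
  ext i j
  simp [vecMulVec_apply, conjTranspose_apply, mul_comm]

lemma trace_conjT_mul_self_nonneg (M : Matrix (Fin n) (Fin n) ℂ) :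
    0 ≤ (Mᴴ * M).trace := by
  have : (Mᴴ * M).trace = ∑ j, ∑ i, star (M i j) * M i j := by
    simp [Matrix.trace, Matrix.diag, Matrix.mul_apply, conjTranspose_apply]
  rw [this]
  exact Finset.sum_nonneg fun j _ => Finset.sum_nonneg fun i _ => star_mul_self_nonneg _

lemma eq_zero_of_trace_conjT_mul_self (M : Matrix (Fin n) (Fin n) ℂ)
    (h : (Mᴴ * M).trace = 0) : M = 0 := by
  have h' : ∑ j, ∑ i, star (M i j) * M i j = 0 := by
    rw [← h]; simp [Matrix.trace, Matrix.diag, Matrix.mul_apply, conjTranspose_apply]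
  ext i j
  have h2 := (Finset.sum_eq_zero_iff_of_nonneg (fun j _ =>
    Finset.sum_nonneg fun i _ => star_mul_self_nonneg (M i j))).mp h' j (Finset.mem_univ _)
  have h3 := (Finset.sum_eq_zero_iff_of_nonneg (fun i _ =>
    star_mul_self_nonneg (M i j))).mp h2 i (Finset.mem_univ _)
  have h4 : (Complex.normSq (M i j) : ℂ) = 0 := by
    rw [Complex.normSq_eq_conj_mul_self]; exact h3
  have h5 : Complex.normSq (M i j) = 0 := by exact_mod_cast h4
  simpa using Complex.normSq_eq_zero.mp h5

open scoped MatrixOrder in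
noncomputable def Matrix.PosSemidef.sqrt {A : Matrix (Fin n) (Fin n) ℂ} (_ : A.PosSemidef) :
    Matrix (Fin n) (Fin n) ℂ := CFC.sqrt A

open scoped MatrixOrder in
lemma Matrix.PosSemidef.sqrt_mul_self {A : Matrix (Fin n) (Fin n) ℂ} (hA : A.PosSemidef) :
    hA.sqrt * hA.sqrt = A := CFC.sqrt_mul_sqrt_self A hA.nonneg

open scoped MatrixOrder in
lemma Matrix.PosSemidef.posSemidef_sqrt {A : Matrix (Fin n) (Fin n) ℂ} (hA : A.PosSemidef) :
    hA.sqrt.PosSemidef := (CFC.sqrt_nonneg A).posSemidef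

lemma trace_psd_mul_eq' {X Y : Matrix (Fin n) (Fin n) ℂ}
    (hX : X.PosSemidef) (hY : Y.PosSemidef) :
    (X * Y).trace = ((hX.sqrt * hY.sqrt)ᴴ * (hX.sqrt * hY.sqrt)).trace := by
  set S := hX.sqrt with hSdef
  set T := hY.sqrt with hTdef
  have hS : S * S = X := hX.sqrt_mul_self
  have hT : T * T = Y := hY.sqrt_mul_self
  have h1 : (S * T)ᴴ * (S * T) = T * (S * S) * T := by
    rw [conjTranspose_mul, hX.posSemidef_sqrt.isHermitian.eq, hY.posSemidef_sqrt.isHermitian.eq]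
    simp only [Matrix.mul_assoc, ← hSdef, ← hTdef]
  rw [h1, ← hS, ← hT]
  calc (S * S * (T * T)).trace
      = ((S * S * T) * T).trace := by simp only [Matrix.mul_assoc]
    _ = (T * (S * S * T)).trace := (Matrix.trace_mul_comm _ _).symm
    _ = (T * (S * S) * T).trace := by simp only [Matrix.mul_assoc]

lemma trace_psd_mul_nonneg {X Y : Matrix (Fin n) (Fin n) ℂ}
    (hX : X.PosSemidef) (hY : Y.PosSemidef) : 0 ≤ (X * Y).trace := by
  rw [trace_psd_mul_eq' hX hY]
  exact trace_conjT_mul_self_nonneg _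

lemma psd_mul_eq_zero_of_trace {X Y : Matrix (Fin n) (Fin n) ℂ}
    (hX : X.PosSemidef) (hY : Y.PosSemidef) (h : (X * Y).trace = 0) : X * Y = 0 := by
  have h2 : hX.sqrt * hY.sqrt = 0 := by
    apply eq_zero_of_trace_conjT_mul_self
    rw [← trace_psd_mul_eq' hX hY, h]
  have e : hX.sqrt * (hX.sqrt * hY.sqrt) * hY.sqrt = X * Y := by
    calc hX.sqrt * (hX.sqrt * hY.sqrt) * hY.sqrt
        = (hX.sqrt * hX.sqrt) * (hY.sqrt * hY.sqrt) := by simp only [Matrix.mul_assoc]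
      _ = X * Y := by rw [hX.sqrt_mul_self, hY.sqrt_mul_self]
  rw [← e, h2]
  simp

lemma psd_herm_idem {M : Matrix (Fin n) (Fin n) ℂ} (hH : M.IsHermitian)
    (hI : M * M = M) : M.PosSemidef := by
  have : M = Mᴴ * M := by rw [hH.eq, hI]
  rw [this]
  exact posSemidef_conjTranspose_mul_self M

lemma psd_neg_eq_zero {M : Matrix (Fin n) (Fin n) ℂ}
    (h1 : M.PosSemidef) (h2 : (-M).PosSemidef) : M = 0 := by
  have htr : (M * 1).trace = 0 := by
    have a := trace_psd_mul_nonneg h1 (Matrix.PosSemidef.one)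
    have b := trace_psd_mul_nonneg h2 (Matrix.PosSemidef.one)
    rw [Matrix.neg_mul] at b
    simp only [Matrix.trace_neg, neg_nonneg] at b
    exact le_antisymm b a
  have := psd_mul_eq_zero_of_trace h1 Matrix.PosSemidef.one htr
  simpa using this

lemma psd_sum {S : Finset (Fin n)} {f : Fin n → Matrix (Fin n) (Fin n) ℂ}
    (h : ∀ i ∈ S, (f i).PosSemidef) : (∑ i ∈ S, f i).PosSemidef := by
  classical
  induction S using Finset.induction_on with
  | empty => simpa using Matrix.PosSemidef.zero
  | insert _ _ hx ih =>
    rw [Finset.sum_insert hx]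
    exact (h _ (Finset.mem_insert_self _ _)).add
      (ih fun i hi => h i (Finset.mem_insert_of_mem hi))

lemma complex_eq_zero_of_nonneg_re {z : ℂ} (h : 0 ≤ z) (h0 : z.re = 0) : z = 0 := by
  have := Complex.nonneg_iff.mp h
  exact Complex.ext h0 this.2.symm

end Helpers
/-- Characterization of all solutions of the optimal detection problem and its dual:
with `E = E₊ + E₀ + E₋`, an admissible `D₀` is optimal iff `E₊ ≤ D₀ ≤ E₊ + E₀`
(equivalently `D₀ = E₊ + D'` with `0 ≤ D' ≤ E₀`); an admissible dual `B₀` is optimal iff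
`B₀ = C₊ + B'` with `B' ≥ 0`, `B' E = 0`; uniqueness holds in the stated degenerate
cases. -/
theorem optimal_detection_solutions {n : ℕ}
    (E C : Matrix (Fin n) (Fin n) ℂ)
    (χ : Fin n → (Fin n → ℂ)) (κ : Fin n → ℝ)
    (hON : ∀ i j, star (χ i) ⬝ᵥ χ j = if i = j then 1 else 0)
    (hspec : C = ∑ i, (κ i : ℂ) • Matrix.vecMulVec (χ i) (star (χ i)))
    (hE : E.IsHermitian) (hEproj : E * E = E) (hCE : C * E = C) :
    (∀ D₀ : Matrix (Fin n) (Fin n) ℂ, D₀.PosSemidef → (E - D₀).PosSemidef →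
      ((∀ D : Matrix (Fin n) (Fin n) ℂ, D.PosSemidef → (E - D).PosSemidef →
          ((C * D).trace).re ≤ ((C * D₀).trace).re) ↔
        ((D₀ - posProjM χ κ).PosSemidef ∧
          (posProjM χ κ + (E - posProjM χ κ - negProjM χ κ) - D₀).PosSemidef))) ∧
    (∀ D₀ : Matrix (Fin n) (Fin n) ℂ, D₀.PosSemidef → (E - D₀).PosSemidef →
      ((∀ D : Matrix (Fin n) (Fin n) ℂ, D.PosSemidef → (E - D).PosSemidef →
          ((C * D).trace).re ≤ ((C * D₀).trace).re) ↔
        (∃ D' : Matrix (Fin n) (Fin n) ℂ, D'.PosSemidef ∧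
          ((E - posProjM χ κ - negProjM χ κ) - D').PosSemidef ∧
          D₀ = posProjM χ κ + D'))) ∧
    (∀ B₀ : Matrix (Fin n) (Fin n) ℂ, B₀.PosSemidef → (B₀ - C).PosSemidef →
      ((∀ B : Matrix (Fin n) (Fin n) ℂ, B.PosSemidef → (B - C).PosSemidef →
          ((B₀ * E).trace).re ≤ ((B * E).trace).re) ↔
        (∃ B' : Matrix (Fin n) (Fin n) ℂ, B'.PosSemidef ∧ B' * E = 0 ∧
          B₀ = posPartM χ κ + B'))) ∧
    (E = posProjM χ κ + negProjM χ κ →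
      ∀ D₀ : Matrix (Fin n) (Fin n) ℂ, D₀.PosSemidef → (E - D₀).PosSemidef →
        (∀ D : Matrix (Fin n) (Fin n) ℂ, D.PosSemidef → (E - D).PosSemidef →
          ((C * D).trace).re ≤ ((C * D₀).trace).re) →
        D₀ = posProjM χ κ) ∧
    (E = 1 →
      ∀ B₀ : Matrix (Fin n) (Fin n) ℂ, B₀.PosSemidef → (B₀ - C).PosSemidef →
        (∀ B : Matrix (Fin n) (Fin n) ℂ, B.PosSemidef → (B - C).PosSemidef →
          ((B₀ * E).trace).re ≤ ((B * E).trace).re) →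
        B₀ = posPartM χ κ) := by
  classical
  set Sp : Finset (Fin n) := Finset.univ.filter (fun i => 0 < κ i) with hSpdef
  set Sn : Finset (Fin n) := Finset.univ.filter (fun i => κ i < 0) with hSndef
  set Q : Fin n → Matrix (Fin n) (Fin n) ℂ :=
    fun i => Matrix.vecMulVec (χ i) (star (χ i)) with hQdef
  set P : Matrix (Fin n) (Fin n) ℂ := posProjM χ κ with hPdef
  set N : Matrix (Fin n) (Fin n) ℂ := negProjM χ κ with hNdef
  set Cp : Matrix (Fin n) (Fin n) ℂ := posPartM χ κ with hCpdef
  have hPQ : P = ∑ i ∈ Sp, Q i := rfl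
  have hNQ : N = ∑ i ∈ Sn, Q i := rfl
  have hCpQ : Cp = ∑ i ∈ Sp, (κ i : ℂ) • Q i := rfl
  have hCsum : C = ∑ i, (κ i : ℂ) • Q i := hspec
  -- basic rank-one facts
  have hQH : ∀ i, (Q i)ᴴ = Q i := fun i => vmv_conjT (χ i)
  have hQQ : ∀ i j, Q i * Q j = if i = j then Q i else 0 := by
    intro i j
    rw [hQdef]
    simp only
    rw [vmv_mul_vmv, hON i j]
    by_cases h : i = j <;> simp [h]
  have htrQ : ∀ i, (Q i).trace = 1 := by
    intro i
    rw [hQdef]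
    simp only
    rw [trace_vmv, hON i i]
    simp
  have hQpsd : ∀ i, (Q i).PosSemidef := by
    intro i
    refine psd_herm_idem (hQH i) ?_
    rw [hQQ i i]; simp
  have hQmulVec : ∀ i (M : Matrix (Fin n) (Fin n) ℂ), M * Q i = vecMulVec (M *ᵥ χ i) (star (χ i)) :=
    fun i M => mul_vmv M (χ i) (star (χ i))
  -- products with C
  have hCQ : ∀ i, C * Q i = (κ i : ℂ) • Q i := by
    intro i
    rw [hCsum, Finset.sum_mul]
    have : ∀ j, ((κ j : ℂ) • Q j) * Q i = if j = i then (κ j : ℂ) • Q j else 0 := by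
      intro j
      rw [smul_mul_assoc, hQQ j i]
      by_cases h : j = i <;> simp [h]
    rw [Finset.sum_congr rfl fun j _ => this j]
    rw [Finset.sum_ite_eq' Finset.univ i (fun j => (κ j : ℂ) • Q j)]
    simp
  have hQC : ∀ i, Q i * C = (κ i : ℂ) • Q i := by
    intro i
    rw [hCsum, Finset.mul_sum]
    have : ∀ j, Q i * ((κ j : ℂ) • Q j) = if i = j then (κ j : ℂ) • Q j else 0 := by
      intro j
      rw [mul_smul_comm, hQQ i j]
      by_cases h : i = j <;> simp [h]
    rw [Finset.sum_congr rfl fun j _ => this j]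
    rw [Finset.sum_ite_eq Finset.univ i (fun j => (κ j : ℂ) • Q j)]
    simp
  have hCH : C.IsHermitian := by
    show Cᴴ = C
    rw [hCsum, conjTranspose_sum]
    refine Finset.sum_congr rfl fun i _ => ?_
    rw [conjTranspose_smul, hQH]
    simp [Complex.conj_ofReal]
  have hEC : E * C = C := by
    have := congrArg conjTranspose hCE
    rwa [conjTranspose_mul, hE.eq, hCH.eq] at this
  have hEQ : ∀ i, κ i ≠ 0 → E * Q i = Q i := by
    intro i hk
    have h1 : E * (C * Q i) = C * Q i := by rw [← Matrix.mul_assoc, hEC]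
    rw [hCQ i, mul_smul_comm] at h1
    have hk' : (κ i : ℂ) ≠ 0 := by exact_mod_cast hk
    exact smul_right_injective _ hk' h1
  have hQE : ∀ i, κ i ≠ 0 → Q i * E = Q i := by
    intro i hk
    have h1 : (Q i * C) * E = Q i * C := by rw [Matrix.mul_assoc, hCE]
    rw [hQC i, smul_mul_assoc] at h1
    have hk' : (κ i : ℂ) ≠ 0 := by exact_mod_cast hk
    exact smul_right_injective _ hk' h1
  -- products among P, N
  have hQsumS : ∀ (i : Fin n) (S : Finset (Fin n)), Q i * (∑ j ∈ S, Q j) =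
      if i ∈ S then Q i else 0 := by
    intro i S
    rw [Finset.mul_sum]
    rw [Finset.sum_congr rfl fun j _ => hQQ i j]
    exact Finset.sum_ite_eq S i (fun _ => Q i)
  have hmemSp : ∀ i, i ∈ Sp ↔ 0 < κ i := by
    intro i; simp [hSpdef]
  have hmemSn : ∀ i, i ∈ Sn ↔ κ i < 0 := by
    intro i; simp [hSndef]
  have hPP : P * P = P := by
    rw [hPQ, Finset.sum_mul]
    refine Finset.sum_congr rfl fun i hi => ?_
    rw [hQsumS, if_pos hi]
  have hNN : N * N = N := by
    rw [hNQ, Finset.sum_mul]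
    refine Finset.sum_congr rfl fun i hi => ?_
    rw [hQsumS, if_pos hi]
  have hPN : P * N = 0 := by
    rw [hPQ, Finset.sum_mul]
    refine Finset.sum_eq_zero fun i hi => ?_
    rw [hNQ, hQsumS, if_neg]
    intro hmem
    exact absurd ((hmemSp i).mp hi) (not_lt.mpr ((hmemSn i).mp hmem).le)
  have hNP : N * P = 0 := by
    rw [hNQ, Finset.sum_mul]
    refine Finset.sum_eq_zero fun i hi => ?_
    rw [hPQ, hQsumS, if_neg]
    intro hmem
    exact absurd ((hmemSn i).mp hi) (not_lt.mpr ((hmemSp i).mp hmem).le)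
  have hCpP : Cp * P = Cp := by
    rw [hCpQ, Finset.sum_mul]
    refine Finset.sum_congr rfl fun i hi => ?_
    rw [smul_mul_assoc, hPQ, hQsumS, if_pos hi]
  have hEP : E * P = P := by
    rw [hPQ, Finset.mul_sum]
    exact Finset.sum_congr rfl fun i hi => hEQ i (ne_of_gt ((hmemSp i).mp hi))
  have hPE : P * E = P := by
    rw [hPQ, Finset.sum_mul]
    exact Finset.sum_congr rfl fun i hi => hQE i (ne_of_gt ((hmemSp i).mp hi))
  have hEN : E * N = N := by
    rw [hNQ, Finset.mul_sum]
    exact Finset.sum_congr rfl fun i hi => hEQ i (ne_of_lt ((hmemSn i).mp hi))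
  have hNE : N * E = N := by
    rw [hNQ, Finset.sum_mul]
    exact Finset.sum_congr rfl fun i hi => hQE i (ne_of_lt ((hmemSn i).mp hi))
  have hCpE : Cp * E = Cp := by
    rw [hCpQ, Finset.sum_mul]
    refine Finset.sum_congr rfl fun i hi => ?_
    rw [smul_mul_assoc, hQE i (ne_of_gt ((hmemSp i).mp hi))]
  -- Hermitian facts
  have hPH : Pᴴ = P := by
    rw [hPQ, conjTranspose_sum]
    exact Finset.sum_congr rfl fun i _ => hQH i
  have hNH : Nᴴ = N := by
    rw [hNQ, conjTranspose_sum]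
    exact Finset.sum_congr rfl fun i _ => hQH i
  have hCpH : Cpᴴ = Cp := by
    rw [hCpQ, conjTranspose_sum]
    refine Finset.sum_congr rfl fun i _ => ?_
    rw [conjTranspose_smul, hQH]
    simp [Complex.conj_ofReal]
  have hPpsd : P.PosSemidef := psd_herm_idem hPH hPP
  have hNpsd : N.PosSemidef := psd_herm_idem hNH hNN
  have hEpsd : E.PosSemidef := psd_herm_idem hE hEproj
  have hEmPpsd : (E - P).PosSemidef := by
    refine psd_herm_idem ?_ ?_
    · show (E - P)ᴴ = E - P
      rw [conjTranspose_sub, hE.eq, hPH]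
    · rw [Matrix.sub_mul, Matrix.mul_sub, Matrix.mul_sub, hEproj, hEP, hPE, hPP]
      abel
  have hEmNpsd : (E - N).PosSemidef := by
    refine psd_herm_idem ?_ ?_
    · show (E - N)ᴴ = E - N
      rw [conjTranspose_sub, hE.eq, hNH]
    · rw [Matrix.sub_mul, Matrix.mul_sub, Matrix.mul_sub, hEproj, hEN, hNE, hNN]
      abel
  have hE0psd : (E - P - N).PosSemidef := by
    refine psd_herm_idem ?_ ?_
    · show (E - P - N)ᴴ = E - P - N
      rw [conjTranspose_sub, conjTranspose_sub, hE.eq, hPH, hNH]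
    · simp only [Matrix.sub_mul, Matrix.mul_sub, hEproj, hEP, hPE, hPP, hEN, hNE, hNN,
        hPN, hNP]
      abel
  -- trace machinery
  have htrQM : ∀ (M : Matrix (Fin n) (Fin n) ℂ) i,
      (Q i * M).trace = star (χ i) ⬝ᵥ (M *ᵥ χ i) := fun M i => trace_vmv_mul (χ i) _ M
  set t : Matrix (Fin n) (Fin n) ℂ → Fin n → ℝ := fun M i => ((Q i * M).trace).re with htdef
  have hquadC : ∀ {M : Matrix (Fin n) (Fin n) ℂ}, M.PosSemidef → ∀ i,
      0 ≤ (Q i * M).trace := by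
    intro M hM i
    rw [htrQM]
    exact hM.dotProduct_mulVec_nonneg (χ i)
  have hquad0 : ∀ {M : Matrix (Fin n) (Fin n) ℂ}, M.PosSemidef → ∀ i, 0 ≤ t M i := by
    intro M hM i
    exact (Complex.nonneg_iff.mp (hquadC hM i)).1
  have htsub : ∀ (M M' : Matrix (Fin n) (Fin n) ℂ) i, t (M' - M) i = t M' i - t M i := by
    intro M M' i
    rw [htdef]
    simp only
    rw [Matrix.mul_sub, Matrix.trace_sub, Complex.sub_re]
  have hmono : ∀ {M M' : Matrix (Fin n) (Fin n) ℂ}, (M' - M).PosSemidef → ∀ i,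
      t M i ≤ t M' i := by
    intro M M' h i
    have := hquad0 h i
    rw [htsub] at this
    linarith
  have hCtr : ∀ M : Matrix (Fin n) (Fin n) ℂ,
      ((C * M).trace).re = ∑ i, κ i * t M i := by
    intro M
    have h1 : C * M = ∑ i, (κ i : ℂ) • (Q i * M) := by
      rw [hCsum, Finset.sum_mul]
      exact Finset.sum_congr rfl fun i _ => smul_mul_assoc _ _ _
    rw [h1, Matrix.trace_sum, Complex.re_sum]
    refine Finset.sum_congr rfl fun i _ => ?_
    rw [Matrix.trace_smul]
    have : (κ i : ℂ) • (Q i * M).trace = (κ i : ℂ) * (Q i * M).trace := rfl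
    rw [this, Complex.re_ofReal_mul]
  have htE : ∀ i, κ i ≠ 0 → t E i = 1 := by
    intro i hk
    rw [htdef]
    simp only
    rw [hQE i hk, htrQ]
    simp
  have htP : ∀ i, t P i = if i ∈ Sp then 1 else 0 := by
    intro i
    rw [htdef]
    simp only
    rw [hPQ, hQsumS]
    by_cases h : i ∈ Sp <;> simp [h, htrQ]
  have htN : ∀ i, t N i = if i ∈ Sn then 1 else 0 := by
    intro i
    rw [htdef]
    simp only
    rw [hNQ, hQsumS]
    by_cases h : i ∈ Sn <;> simp [h, htrQ]
  
  -- primal bound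
  set s : ℝ := ∑ i ∈ Sp, κ i with hsdef
  have hterm : ∀ (D : Matrix (Fin n) (Fin n) ℂ), D.PosSemidef → (E - D).PosSemidef → ∀ i,
      κ i * t D i ≤ (if 0 < κ i then κ i else 0) := by
    intro D hD hED i
    have h0 : 0 ≤ t D i := hquad0 hD i
    by_cases hp : 0 < κ i
    · rw [if_pos hp]
      have h1 : t D i ≤ 1 := by
        have := hmono hED i
        rwa [htE i (ne_of_gt hp)] at this
      nlinarith
    · rw [if_neg hp]
      rcases lt_or_eq_of_le (not_lt.mp hp) with hn | hz
      · nlinarith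
      · rw [hz]; simp
  have hsum_ite : ∑ i, (if 0 < κ i then κ i else 0) = s := by
    rw [hsdef, hSpdef, Finset.sum_filter]
  have hCDle : ∀ (D : Matrix (Fin n) (Fin n) ℂ), D.PosSemidef → (E - D).PosSemidef →
      ((C * D).trace).re ≤ s := by
    intro D hD hED
    rw [hCtr]
    calc ∑ i, κ i * t D i ≤ ∑ i, (if 0 < κ i then κ i else 0) :=
          Finset.sum_le_sum fun i _ => hterm D hD hED i
      _ = s := hsum_ite
  have htrCP : ((C * P).trace).re = s := by
    rw [hCtr, ← hsum_ite]
    refine Finset.sum_congr rfl fun i _ => ?_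
    rw [htP i]
    by_cases h : 0 < κ i
    · rw [if_pos ((hmemSp i).mpr h), if_pos h, mul_one]
    · rw [if_neg (fun hm => h ((hmemSp i).mp hm)), if_neg h, mul_zero]
  -- main primal characterization
  have main1 : ∀ D₀ : Matrix (Fin n) (Fin n) ℂ, D₀.PosSemidef → (E - D₀).PosSemidef →
      ((∀ D : Matrix (Fin n) (Fin n) ℂ, D.PosSemidef → (E - D).PosSemidef →
          ((C * D).trace).re ≤ ((C * D₀).trace).re) ↔
        ((D₀ - P).PosSemidef ∧ (P + (E - P - N) - D₀).PosSemidef)) := by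
    intro D₀ hD₀ hED₀
    constructor
    · intro hopt
      have heqs : ((C * D₀).trace).re = s := by
        refine le_antisymm (hCDle D₀ hD₀ hED₀) ?_
        rw [← htrCP]
        exact hopt P hPpsd hEmPpsd
      have hz : ∑ i, ((if 0 < κ i then κ i else 0) - κ i * t D₀ i) = 0 := by
        rw [Finset.sum_sub_distrib, hsum_ite, ← hCtr, heqs, sub_self]
      have hterm0 : ∀ i, (if 0 < κ i then κ i else 0) - κ i * t D₀ i = 0 := by
        intro i
        exact (Finset.sum_eq_zero_iff_of_nonneg (fun i _ =>
          sub_nonneg.mpr (hterm D₀ hD₀ hED₀ i))).mp hz i (Finset.mem_univ i)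
      have ht1 : ∀ i, 0 < κ i → t D₀ i = 1 := by
        intro i hp
        have h2 := hterm0 i
        rw [if_pos hp] at h2
        have h3 : κ i * (1 - t D₀ i) = 0 := by ring_nf; linarith
        rcases mul_eq_zero.mp h3 with h4 | h4
        · exact absurd h4 (ne_of_gt hp)
        · linarith
      have ht0 : ∀ i, κ i < 0 → t D₀ i = 0 := by
        intro i hm
        have h2 := hterm0 i
        rw [if_neg (not_lt.mpr hm.le)] at h2
        have h3 : κ i * t D₀ i = 0 := by linarith
        rcases mul_eq_zero.mp h3 with h4 | h4
        · exact absurd h4 (ne_of_lt hm)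
        · exact h4
      have hD₀Q1 : ∀ i, 0 < κ i → D₀ * Q i = Q i := by
        intro i hp
        have hE0 : t (E - D₀) i = 0 := by
          rw [htsub, htE i (ne_of_gt hp), ht1 i hp, sub_self]
        have hc : (Q i * (E - D₀)).trace = 0 :=
          complex_eq_zero_of_nonneg_re (hquadC hED₀ i) hE0
        rw [htrQM] at hc
        have hv : (E - D₀) *ᵥ χ i = 0 := (hED₀.dotProduct_mulVec_zero_iff (χ i)).mp hc
        have h2 : (E - D₀) * Q i = 0 := by
          rw [hQmulVec i (E - D₀), hv]
          ext a b; simp [vecMulVec_apply]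
        rw [Matrix.sub_mul] at h2
        have h3 := sub_eq_zero.mp h2
        rw [← h3, hEQ i (ne_of_gt hp)]
      have hD₀Q0 : ∀ i, κ i < 0 → D₀ * Q i = 0 := by
        intro i hm
        have hc : (Q i * D₀).trace = 0 :=
          complex_eq_zero_of_nonneg_re (hquadC hD₀ i) (ht0 i hm)
        rw [htrQM] at hc
        have hv : D₀ *ᵥ χ i = 0 := (hD₀.dotProduct_mulVec_zero_iff (χ i)).mp hc
        rw [hQmulVec i D₀, hv]
        ext a b; simp [vecMulVec_apply]
      have hD₀P : D₀ * P = P := by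
        rw [hPQ, Finset.mul_sum]
        exact Finset.sum_congr rfl fun i hi => hD₀Q1 i ((hmemSp i).mp hi)
      have hPD₀ : P * D₀ = P := by
        have h4 := congrArg conjTranspose hD₀P
        rwa [conjTranspose_mul, hPH, hD₀.isHermitian.eq] at h4
      have hD₀N : D₀ * N = 0 := by
        rw [hNQ, Finset.mul_sum]
        exact Finset.sum_eq_zero fun i hi => hD₀Q0 i ((hmemSn i).mp hi)
      have hND₀ : N * D₀ = 0 := by
        have h4 := congrArg conjTranspose hD₀N
        rwa [conjTranspose_mul, hNH, hD₀.isHermitian.eq, conjTranspose_zero] at h4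
      constructor
      · have key : (1 - P) * D₀ * (1 - P)ᴴ = D₀ - P := by
          have hh : (1 - P)ᴴ = 1 - P := by
            rw [conjTranspose_sub, conjTranspose_one, hPH]
          rw [hh]
          simp only [Matrix.sub_mul, Matrix.mul_sub, Matrix.one_mul, Matrix.mul_one,
            hD₀P, hPD₀, hPP]
          abel
        exact key ▸ hD₀.mul_mul_conjTranspose_same (1 - P)
      · have key : (1 - N) * (E - D₀) * (1 - N)ᴴ = P + (E - P - N) - D₀ := by
          have hh : (1 - N)ᴴ = 1 - N := by
            rw [conjTranspose_sub, conjTranspose_one, hNH]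
          rw [hh]
          simp only [Matrix.sub_mul, Matrix.mul_sub, Matrix.one_mul, Matrix.mul_one,
            hEN, hNE, hNN, hD₀N, hND₀, sub_zero, Matrix.mul_zero, Matrix.zero_mul]
          abel
        exact key ▸ hED₀.mul_mul_conjTranspose_same (1 - N)
    · rintro ⟨h1, h2⟩ D hD hED
      have h2' : (E - N - D₀).PosSemidef := by
        have e : P + (E - P - N) - D₀ = E - N - D₀ := by abel
        rwa [e] at h2
      have htrCD₀ : ((C * D₀).trace).re = s := by
        rw [hCtr, ← hsum_ite]
        refine Finset.sum_congr rfl fun i _ => ?_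
        by_cases hp : 0 < κ i
        · have hl : 1 ≤ t D₀ i := by
            have := hmono h1 i
            rwa [htP i, if_pos ((hmemSp i).mpr hp)] at this
          have hu : t D₀ i ≤ 1 := by
            have := hmono h2' i
            rw [htsub, htE i (ne_of_gt hp), htN i,
              if_neg (fun hm => (not_lt.mpr hp.le) ((hmemSn i).mp hm))] at this
            linarith
          rw [if_pos hp]
          have : t D₀ i = 1 := le_antisymm hu hl
          rw [this, mul_one]
        · rw [if_neg hp]
          rcases lt_or_eq_of_le (not_lt.mp hp) with hm | hz
          · have hl : 0 ≤ t D₀ i := by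
              have := hmono h1 i
              rw [htP i, if_neg (fun hmem => hp ((hmemSp i).mp hmem))] at this
              linarith [hquad0 hPpsd i]
            have hu : t D₀ i ≤ 0 := by
              have := hmono h2' i
              rw [htsub, htE i (ne_of_lt hm), htN i, if_pos ((hmemSn i).mpr hm)] at this
              linarith
            have : t D₀ i = 0 := le_antisymm hu hl
            rw [this, mul_zero]
          · rw [hz, zero_mul]
      rw [htrCD₀]
      exact hCDle D hD hED
  -- dual machinery
  have htC : ∀ i, t C i = κ i := by
    intro i
    rw [htdef]
    simp only
    rw [hQC i, Matrix.trace_smul, htrQ]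
    simp
  have hBPtr : ∀ B : Matrix (Fin n) (Fin n) ℂ, ((B * P).trace).re = ∑ i ∈ Sp, t B i := by
    intro B
    have h1 : B * P = ∑ i ∈ Sp, B * Q i := by rw [hPQ, Finset.mul_sum]
    rw [h1, Matrix.trace_sum, Complex.re_sum]
    exact Finset.sum_congr rfl fun i _ => by rw [Matrix.trace_mul_comm]
  have hsplit : ∀ B : Matrix (Fin n) (Fin n) ℂ,
      ((B * E).trace).re = ((B * P).trace).re + ((B * (E - P)).trace).re := by
    intro B
    have h1 : B * E = B * P + B * (E - P) := by
      rw [Matrix.mul_sub]; abel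
    rw [h1, Matrix.trace_add, Complex.add_re]
  have hBPge : ∀ B : Matrix (Fin n) (Fin n) ℂ, (B - C).PosSemidef →
      s ≤ ((B * P).trace).re := by
    intro B hBC
    rw [hBPtr, hsdef]
    refine Finset.sum_le_sum fun i _ => ?_
    have := hmono hBC i
    rwa [htC i] at this
  have hBEP0 : ∀ B : Matrix (Fin n) (Fin n) ℂ, B.PosSemidef →
      0 ≤ ((B * (E - P)).trace).re := fun B hB =>
    (Complex.nonneg_iff.mp (trace_psd_mul_nonneg hB hEmPpsd)).1
  have hdual_lb : ∀ B : Matrix (Fin n) (Fin n) ℂ, B.PosSemidef → (B - C).PosSemidef →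
      s ≤ ((B * E).trace).re := by
    intro B hB hBC
    rw [hsplit]
    have := hBPge B hBC
    have := hBEP0 B hB
    linarith
  have hsmulpsd : ∀ (c : ℝ), 0 ≤ c → ∀ i, ((c : ℂ) • Q i).PosSemidef := by
    intro c hc i
    refine Matrix.PosSemidef.of_dotProduct_mulVec_nonneg ?_ ?_
    · show ((c : ℂ) • Q i)ᴴ = (c : ℂ) • Q i
      rw [conjTranspose_smul, hQH]
      simp [Complex.conj_ofReal]
    · intro x
      have h1 : star x ⬝ᵥ ((c : ℂ) • Q i) *ᵥ x = (c : ℂ) * (star x ⬝ᵥ Q i *ᵥ x) := by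
        rw [smul_mulVec, dotProduct_smul, smul_eq_mul]
      rw [h1]
      exact mul_nonneg (by exact_mod_cast hc) ((hQpsd i).dotProduct_mulVec_nonneg x)
  have hCppsd : Cp.PosSemidef := by
    rw [hCpQ]
    exact psd_sum fun i hi => hsmulpsd (κ i) (le_of_lt ((hmemSp i).mp hi)) i
  have hCpmC : (Cp - C).PosSemidef := by
    have hsplitC : C = (∑ i ∈ Sp, (κ i : ℂ) • Q i) +
        ∑ i ∈ Finset.univ.filter (fun i => ¬ 0 < κ i), (κ i : ℂ) • Q i := by
      rw [hCsum, hSpdef]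
      exact (Finset.sum_filter_add_sum_filter_not Finset.univ _ _).symm
    have e : Cp - C = ∑ i ∈ Finset.univ.filter (fun i => ¬ 0 < κ i),
        ((-κ i : ℝ) : ℂ) • Q i := by
      rw [hCpQ, hsplitC, sub_add_cancel_left]
      rw [← Finset.sum_neg_distrib]
      refine Finset.sum_congr rfl fun i _ => ?_
      push_cast
      rw [neg_smul]
    rw [e]
    refine psd_sum fun i hi => hsmulpsd (-κ i) ?_ i
    have := Finset.mem_filter.mp hi
    linarith [not_lt.mp this.2]
  have htrCp : (Cp.trace).re = s := by
    rw [hCpQ, Matrix.trace_sum, Complex.re_sum, hsdef]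
    refine Finset.sum_congr rfl fun i _ => ?_
    rw [Matrix.trace_smul, htrQ]
    simp
  have htrCpE : ((Cp * E).trace).re = s := by rw [hCpE, htrCp]
  -- main dual characterization
  have main3 : ∀ B₀ : Matrix (Fin n) (Fin n) ℂ, B₀.PosSemidef → (B₀ - C).PosSemidef →
      ((∀ B : Matrix (Fin n) (Fin n) ℂ, B.PosSemidef → (B - C).PosSemidef →
          ((B₀ * E).trace).re ≤ ((B * E).trace).re) ↔
        (∃ B' : Matrix (Fin n) (Fin n) ℂ, B'.PosSemidef ∧ B' * E = 0 ∧
          B₀ = Cp + B')) := by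
    intro B₀ hB₀ hB₀C
    constructor
    · intro hopt
      have h1 : ((B₀ * E).trace).re = s := by
        refine le_antisymm ?_ (hdual_lb B₀ hB₀ hB₀C)
        have := hopt Cp hCppsd hCpmC
        rwa [htrCpE] at this
      have hab : ((B₀ * P).trace).re + ((B₀ * (E - P)).trace).re = s := by
        rw [← hsplit]; exact h1
      have ha := hBPge B₀ hB₀C
      have hb := hBEP0 B₀ hB₀
      have haeq : ((B₀ * P).trace).re = s := by linarith
      have hbeq : ((B₀ * (E - P)).trace).re = 0 := by linarith
      have hzero : B₀ * (E - P) = 0 := psd_mul_eq_zero_of_trace hB₀ hEmPpsd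
        (complex_eq_zero_of_nonneg_re (trace_psd_mul_nonneg hB₀ hEmPpsd) hbeq)
      have hsum0 : ∑ i ∈ Sp, (t B₀ i - κ i) = 0 := by
        rw [Finset.sum_sub_distrib, ← hBPtr, haeq, ← hsdef, sub_self]
      have hterm0 : ∀ i ∈ Sp, t B₀ i - κ i = 0 := by
        refine (Finset.sum_eq_zero_iff_of_nonneg (fun i _ => sub_nonneg.mpr ?_)).mp hsum0
        have := hmono hB₀C i
        rwa [htC i] at this
      have hBQ : ∀ i ∈ Sp, B₀ * Q i = (κ i : ℂ) • Q i := by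
        intro i hi
        have ht' : t (B₀ - C) i = 0 := by
          rw [htsub, htC]
          have := hterm0 i hi
          linarith
        have hc : (Q i * (B₀ - C)).trace = 0 :=
          complex_eq_zero_of_nonneg_re (hquadC hB₀C i) ht'
        rw [htrQM] at hc
        have hv := (hB₀C.dotProduct_mulVec_zero_iff (χ i)).mp hc
        have h2 : (B₀ - C) * Q i = 0 := by
          rw [hQmulVec i (B₀ - C), hv]
          ext a b; simp [vecMulVec_apply]
        rw [Matrix.sub_mul] at h2
        rw [sub_eq_zero.mp h2, hCQ]
      have hB₀P : B₀ * P = Cp := by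
        rw [hPQ, Finset.mul_sum, hCpQ]
        exact Finset.sum_congr rfl hBQ
      have hPB₀ : P * B₀ = Cp := by
        have h4 := congrArg conjTranspose hB₀P
        rwa [conjTranspose_mul, hPH, hB₀.isHermitian.eq, hCpH] at h4
      have hB₀E : B₀ * E = Cp := by
        have h4 : B₀ * E - B₀ * P = 0 := by
          rw [← Matrix.mul_sub]; exact hzero
        rw [sub_eq_zero.mp h4, hB₀P]
      refine ⟨B₀ - Cp, ?_, ?_, by abel⟩
      · have key : (1 - P) * B₀ * (1 - P)ᴴ = B₀ - Cp := by
          have hh : (1 - P)ᴴ = 1 - P := by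
            rw [conjTranspose_sub, conjTranspose_one, hPH]
          rw [hh]
          simp only [Matrix.sub_mul, Matrix.mul_sub, Matrix.one_mul, Matrix.mul_one,
            hB₀P, hPB₀, hCpP]
          abel
        exact key ▸ hB₀.mul_mul_conjTranspose_same (1 - P)
      · rw [Matrix.sub_mul, hB₀E, hCpE, sub_self]
    · rintro ⟨B', hB', hB'E, rfl⟩ B hB hBC
      have e : (Cp + B') * E = Cp := by
        rw [Matrix.add_mul, hB'E, hCpE, add_zero]
      rw [e, htrCp]
      exact hdual_lb B hB hBC
  refine ⟨main1, ?_, main3, ?_, ?_⟩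
  · -- existence form of primal
    intro D₀ hD₀ hED₀
    rw [main1 D₀ hD₀ hED₀]
    constructor
    · rintro ⟨hA, hB⟩
      refine ⟨D₀ - P, hA, ?_, by abel⟩
      have e : E - P - N - (D₀ - P) = P + (E - P - N) - D₀ := by abel
      rwa [e]
    · rintro ⟨D', hD', hE0D', rfl⟩
      constructor
      · have e : P + D' - P = D' := by abel
        rwa [e]
      · have e : P + (E - P - N) - (P + D') = E - P - N - D' := by abel
        rwa [e]
  · -- primal uniqueness
    intro hEPN D₀ hD₀ hED₀ hopt
    obtain ⟨hA, hB⟩ := (main1 D₀ hD₀ hED₀).mp hopt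
    have e : P + (E - P - N) - D₀ = -(D₀ - P) := by
      rw [hEPN]; abel
    rw [e] at hB
    have := psd_neg_eq_zero hA hB
    have h2 := sub_eq_zero.mp this
    exact h2
  · -- dual uniqueness
    intro hE1 B₀ hB₀ hB₀C hopt
    obtain ⟨B', hB', hB'E, hB₀eq⟩ := (main3 B₀ hB₀ hB₀C).mp hopt
    have hB'0 : B' = 0 := by
      rw [hE1] at hB'E
      simpa using hB'E
    rw [hB₀eq, hB'0, add_zero]
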